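/- arXiv:1809.04442 — 3 statements merged into one kernel-verified Lean document; each statement's English description precedes it below -/
import Mathlib

section
/- Let μ > 0 and η, α ∈ ℝ, let F̄(x, y) = (μx − ηy − (x² + y²)(x − αy), μy + ηx − (x² + y²)(y + αx)), ω = η − αμ, Φ(θ) = (√μ·cos θ, √μ·sin θ), and define R(θ) = (1/√μ)·(−sin θ − α cos θ, cos θ − α sin θ). Then: (i) ⟨R(θ), Φ′(θ)⟩ = 1 for all θ (normalization of the phase resetting curve); and (ii) R satisfies the adjoint equation ω·R′(θ) = −J̄(θ)ᵀ R(θ) for all θ, where J̄(θ) is the Jacobian matrix of F̄ evaluated at Φ(θ). -/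
open scoped RealInnerProductSpace


noncomputable def E2aux (a b : ℝ) : EuclideanSpace ℝ (Fin 2) :=
  (WithLp.equiv 2 (Fin 2 → ℝ)).symm ![a, b]

@[simp] lemma E2aux_zero (a b : ℝ) : E2aux a b 0 = a := rfl
@[simp] lemma E2aux_one (a b : ℝ) : E2aux a b 1 = b := rfl

lemma hasDerivAt_E2aux {a b : ℝ → ℝ} {a' b' : ℝ} {θ : ℝ}
    (ha : HasDerivAt a a' θ) (hb : HasDerivAt b b' θ) :
    HasDerivAt (fun t => E2aux (a t) (b t)) (E2aux a' b') θ := by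
  have h : HasDerivAt (fun t => (![a t, b t] : Fin 2 → ℝ)) (![a', b'] : Fin 2 → ℝ) θ := by
    rw [hasDerivAt_pi]
    intro i
    fin_cases i
    · simpa using ha
    · simpa using hb
  exact ((EuclideanSpace.equiv (Fin 2) ℝ).symm.hasFDerivAt.comp_hasDerivAt θ h : )

lemma hasFDerivAt_radial (μ η α : ℝ) (p : EuclideanSpace ℝ (Fin 2)) :
    HasFDerivAt (fun v : EuclideanSpace ℝ (Fin 2) =>
      E2aux (μ * v 0 - η * v 1 - (v 0 ^ 2 + v 1 ^ 2) * (v 0 - α * v 1))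
          (μ * v 1 + η * v 0 - (v 0 ^ 2 + v 1 ^ 2) * (v 1 + α * v 0)))
      (Matrix.toEuclideanCLM (𝕜 := ℝ)
        !![μ - 2*(p 0)*(p 0 - α*(p 1)) - (p 0^2 + p 1^2), -η - 2*(p 1)*(p 0 - α*(p 1)) + α*(p 0^2+p 1^2);
           η - 2*(p 0)*(p 1 + α*(p 0)) - α*(p 0^2+p 1^2),  μ - 2*(p 1)*(p 1 + α*(p 0)) - (p 0^2+p 1^2)]) p := by
  set A := Matrix.toEuclideanCLM (𝕜 := ℝ)
        !![μ - 2*(p 0)*(p 0 - α*(p 1)) - (p 0^2 + p 1^2), -η - 2*(p 1)*(p 0 - α*(p 1)) + α*(p 0^2+p 1^2);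
           η - 2*(p 0)*(p 1 + α*(p 0)) - α*(p 0^2+p 1^2),  μ - 2*(p 1)*(p 1 + α*(p 0)) - (p 0^2+p 1^2)] with hAdef
  have hproj : ∀ i : Fin 2, HasFDerivAt (fun v : EuclideanSpace ℝ (Fin 2) => v i)
      (EuclideanSpace.proj i : EuclideanSpace ℝ (Fin 2) →L[ℝ] ℝ) p :=
    fun i => by simpa using ((EuclideanSpace.proj i : EuclideanSpace ℝ (Fin 2) →L[ℝ] ℝ).hasFDerivAt (x := p))
  have h : HasFDerivAt (fun v : EuclideanSpace ℝ (Fin 2) =>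
      (![μ * v 0 - η * v 1 - (v 0 ^ 2 + v 1 ^ 2) * (v 0 - α * v 1),
         μ * v 1 + η * v 0 - (v 0 ^ 2 + v 1 ^ 2) * (v 1 + α * v 0)] : Fin 2 → ℝ))
      ((EuclideanSpace.equiv (Fin 2) ℝ : EuclideanSpace ℝ (Fin 2) →L[ℝ] (Fin 2 → ℝ)).comp A) p := by
    apply hasFDerivAt_pi'.2
    intro i
    fin_cases i
    · have hd := (((hproj 0).const_mul μ).sub ((hproj 1).const_mul η)).sub
        ((((hproj 0).mul (hproj 0)).add ((hproj 1).mul (hproj 1))).mul ((hproj 0).sub ((hproj 1).const_mul α)))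
      refine (hd.congr_of_eventuallyEq ?_).congr_fderiv ?_
      · filter_upwards with v
        norm_num
        exact Or.inl (by ring)
      · ext v
        simp [hAdef, Matrix.toLin'_apply, Matrix.mulVec, dotProduct, Fin.sum_univ_two]
        ring
    · have hd := (((hproj 1).const_mul μ).add ((hproj 0).const_mul η)).sub
        ((((hproj 0).mul (hproj 0)).add ((hproj 1).mul (hproj 1))).mul ((hproj 1).add ((hproj 0).const_mul α)))
      refine (hd.congr_of_eventuallyEq ?_).congr_fderiv ?_
      · filter_upwards with v
        norm_num
        exact Or.inl (by ring)
      · ext v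
        simp [hAdef, Matrix.toLin'_apply, Matrix.mulVec, dotProduct, Fin.sum_univ_two]
        ring
  have h2 := (EuclideanSpace.equiv (Fin 2) ℝ).symm.hasFDerivAt.comp p h
  refine h2.congr_fderiv ?_
  ext v
  rfl

/-- **The phase resetting curve of the averaged radial isochron clock.**
For `μ > 0`, `η, α ∈ ℝ`, the averaged Cartesian vector field
`F̄(x, y) = (μx − ηy − (x² + y²)(x − αy), μy + ηx − (x² + y²)(y + αx))`, `ω = η − αμ`,
limit cycle `Φ θ = (√μ cos θ, √μ sin θ)` and
`R θ = (1/√μ)(−sin θ − α cos θ, cos θ − α sin θ)`, we have: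
(i) the normalization `⟪R θ, Φ' θ⟫ = 1` for all `θ`; and
(ii) `R` satisfies the adjoint equation `ω • R' θ = −J̄(θ)ᵀ (R θ)`, where `J̄(θ)` is the
Jacobian (Fréchet derivative) of `F̄` at `Φ θ` and `ᵀ` denotes the adjoint. -/
theorem radial_isochron_prc
    (μ η α ω : ℝ) (hμ : 0 < μ) (hω : ω = η - α * μ)
    (Fbar : EuclideanSpace ℝ (Fin 2) → EuclideanSpace ℝ (Fin 2))
    (hFbar : Fbar = fun v =>
      WithLp.toLp 2 ![μ * v 0 - η * v 1 - (v 0 ^ 2 + v 1 ^ 2) * (v 0 - α * v 1),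
        μ * v 1 + η * v 0 - (v 0 ^ 2 + v 1 ^ 2) * (v 1 + α * v 0)])
    (Φ R : ℝ → EuclideanSpace ℝ (Fin 2))
    (hΦ : Φ = fun θ => WithLp.toLp 2 ![Real.sqrt μ * Real.cos θ, Real.sqrt μ * Real.sin θ])
    (hR : R = fun θ => (1 / Real.sqrt μ) •
      (WithLp.toLp 2 ![-Real.sin θ - α * Real.cos θ, Real.cos θ - α * Real.sin θ] :
        EuclideanSpace ℝ (Fin 2))) :
    (∀ θ : ℝ, ⟪R θ, deriv Φ θ⟫ = 1) ∧
      (∀ θ : ℝ, DifferentiableAt ℝ R θ ∧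
        ω • deriv R θ =
          -(ContinuousLinearMap.adjoint (fderiv ℝ Fbar (Φ θ))) (R θ)) := by
  set r := Real.sqrt μ with hrdef
  have hr0 : r ≠ 0 := by positivity
  have hr2 : r * r = μ := Real.mul_self_sqrt hμ.le
  -- rewrite everything through E2aux
  have hΦ' : Φ = fun θ => E2aux (r * Real.cos θ) (r * Real.sin θ) := hΦ
  have hR' : R = fun θ => E2aux ((1 / r) * (-Real.sin θ - α * Real.cos θ))
      ((1 / r) * (Real.cos θ - α * Real.sin θ)) := by
    rw [hR]
    funext θ
    ext i
    fin_cases i <;> rfl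
  have hFbar' : Fbar = fun v : EuclideanSpace ℝ (Fin 2) =>
      E2aux (μ * v 0 - η * v 1 - (v 0 ^ 2 + v 1 ^ 2) * (v 0 - α * v 1))
          (μ * v 1 + η * v 0 - (v 0 ^ 2 + v 1 ^ 2) * (v 1 + α * v 0)) := hFbar
  -- derivative of Φ
  have hdΦ : ∀ θ : ℝ, HasDerivAt Φ (E2aux (r * -Real.sin θ) (r * Real.cos θ)) θ := by
    intro θ
    rw [hΦ']
    exact hasDerivAt_E2aux ((Real.hasDerivAt_cos θ).const_mul r) ((Real.hasDerivAt_sin θ).const_mul r)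
  -- derivative of R
  have hdR : ∀ θ : ℝ, HasDerivAt R
      (E2aux ((1 / r) * (-Real.cos θ - α * -Real.sin θ))
             ((1 / r) * (-Real.sin θ - α * Real.cos θ))) θ := by
    intro θ
    rw [hR']
    exact hasDerivAt_E2aux
      ((((Real.hasDerivAt_sin θ).neg).sub ((Real.hasDerivAt_cos θ).const_mul α)).const_mul (1 / r))
      (((Real.hasDerivAt_cos θ).sub ((Real.hasDerivAt_sin θ).const_mul α)).const_mul (1 / r))
  constructor
  · intro θ
    rw [(hdΦ θ).deriv, hR']
    simp only [PiLp.inner_apply, RCLike.inner_apply, starRingEnd_apply, star_trivial,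
      Fin.sum_univ_two, E2aux_zero, E2aux_one]
    have h1 := Real.sin_sq_add_cos_sq θ
    field_simp
    nlinarith [h1, hr2]
  · intro θ
    refine ⟨(hdR θ).differentiableAt, ?_⟩
    rw [(hdR θ).deriv]
    have hp0 : (Φ θ) 0 = r * Real.cos θ := by rw [hΦ']; rfl
    have hp1 : (Φ θ) 1 = r * Real.sin θ := by rw [hΦ']; rfl
    have hsum : (Φ θ) 0 ^ 2 + (Φ θ) 1 ^ 2 = μ := by
      rw [hp0, hp1]
      have h1 := Real.sin_sq_add_cos_sq θ
      linear_combination (r * r) * h1 + hr2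
    have hA : HasFDerivAt Fbar (Matrix.toEuclideanCLM (𝕜 := ℝ)
        !![μ - 2*((Φ θ) 0)*((Φ θ) 0 - α*((Φ θ) 1)) - ((Φ θ) 0^2 + (Φ θ) 1^2),
           -η - 2*((Φ θ) 1)*((Φ θ) 0 - α*((Φ θ) 1)) + α*((Φ θ) 0^2+(Φ θ) 1^2);
           η - 2*((Φ θ) 0)*((Φ θ) 1 + α*((Φ θ) 0)) - α*((Φ θ) 0^2+(Φ θ) 1^2),
           μ - 2*((Φ θ) 1)*((Φ θ) 1 + α*((Φ θ) 0)) - ((Φ θ) 0^2+(Φ θ) 1^2)]) (Φ θ) := by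
      rw [hFbar']
      exact hasFDerivAt_radial μ η α (Φ θ)
    rw [hA.fderiv]
    rw [← ContinuousLinearMap.star_eq_adjoint, ← map_star]
    ext i
    have hRθ0 : (R θ) 0 = (1 / r) * (-Real.sin θ - α * Real.cos θ) := by rw [hR']; rfl
    have hRθ1 : (R θ) 1 = (1 / r) * (Real.cos θ - α * Real.sin θ) := by rw [hR']; rfl
    fin_cases i
    · show _ = _
      simp only [PiLp.smul_apply, PiLp.neg_apply, smul_eq_mul]
      rw [show ∀ (M : Matrix (Fin 2) (Fin 2) ℝ) (x : EuclideanSpace ℝ (Fin 2)) (j : Fin 2),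
          (Matrix.toEuclideanCLM (𝕜 := ℝ) M x) j = M.mulVec x j from fun _ _ _ => rfl]
      simp only [Matrix.star_eq_conjTranspose, Matrix.mulVec, dotProduct,
        Fin.sum_univ_two, Matrix.conjTranspose_apply, star_trivial,
        Matrix.cons_val', Matrix.cons_val_zero, Matrix.cons_val_one, Matrix.head_cons,
        Matrix.empty_val', Matrix.cons_val_fin_one, Matrix.head_fin_const,
        Matrix.of_apply, Fin.zero_eta, Fin.mk_one,
        E2aux_zero, E2aux_one, hsum, hp0, hp1, hRθ0, hRθ1, hω]
      have h1 := Real.sin_sq_add_cos_sq θ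
      field_simp
      linear_combination ((1 + α ^ 2) * r ^ 2 * Real.sin θ) * h1 + ((1 + α ^ 2) * Real.sin θ) * hr2
    · show _ = _
      simp only [PiLp.smul_apply, PiLp.neg_apply, smul_eq_mul]
      rw [show ∀ (M : Matrix (Fin 2) (Fin 2) ℝ) (x : EuclideanSpace ℝ (Fin 2)) (j : Fin 2),
          (Matrix.toEuclideanCLM (𝕜 := ℝ) M x) j = M.mulVec x j from fun _ _ _ => rfl]
      simp only [Matrix.star_eq_conjTranspose, Matrix.mulVec, dotProduct,
        Fin.sum_univ_two, Matrix.conjTranspose_apply, star_trivial,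
        Matrix.cons_val', Matrix.cons_val_zero, Matrix.cons_val_one, Matrix.head_cons,
        Matrix.empty_val', Matrix.cons_val_fin_one, Matrix.head_fin_const,
        Matrix.of_apply, Fin.zero_eta, Fin.mk_one,
        E2aux_zero, E2aux_one, hsum, hp0, hp1, hRθ0, hRθ1, hω]
      have h1 := Real.sin_sq_add_cos_sq θ
      field_simp
      linear_combination (-(1 + α ^ 2) * r ^ 2 * Real.cos θ) * h1 + (-(1 + α ^ 2) * Real.cos θ) * hr2
end

section
/- Let Γ be a finite index set, let ρ : Γ → ℝ be nonnegative weights with ∑_{n∈Γ} ρ_n = 1, let μ_n, η_n (n ∈ Γ) and α be real parameters, and set μ̄ = ∑_n ρ_n μ_n, η̄ = ∑_n ρ_n η_n, assuming μ̄ > 0. Define, for each n ∈ Γ, F_n(x, y) = (μ_n x − η_n y − (x² + y²)(x − αy), μ_n y + η_n x − (x² + y²)(y + αx)), and let F̄(x,y) = ∑_n ρ_n F_n(x,y) (which equals the same expression with μ̄, η̄ in place of μ_n, η_n). Let Φ(θ) = (√μ̄·cos θ, √μ̄·sin θ) and R(θ) = (1/√μ̄)·(−sin θ − α cos θ, cos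 θ − α sin θ). Then for every n ∈ Γ and every θ ∈ ℝ, ⟨R(θ), F_n(Φ(θ)) − F̄(Φ(θ))⟩ = (η_n − η̄) − α(μ_n − μ̄) = ω_n − ω̄, where ω_n = η_n − α μ_n and ω̄ = η̄ − α μ̄. In particular the phase fluctuation function ℱ_n(θ) := ⟨R(θ), F_n(Φ(θ)) − F̄(Φ(θ))⟩ is constant in θ, so ℱ_n′ ≡ 0. -/
open scoped RealInnerProductSpace

/-- **Constant phase fluctuation functions for switching radial isochron clocks.**
Let `Γ` be a finite index set, `ρ : Γ → ℝ` nonnegative weights summing to `1`, `μ_n, η_n, α`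
real parameters with `μ̄ = ∑ ρ_n μ_n > 0`, `η̄ = ∑ ρ_n η_n`. Let `F_n` be the radial isochron
clock field with parameters `(μ_n, η_n)`, `F̄` the same expression with `(μ̄, η̄)`,
`Φ θ = (√μ̄ cos θ, √μ̄ sin θ)` and `R θ = (1/√μ̄)(−sin θ − α cos θ, cos θ − α sin θ)`.
Then `F̄ = ∑ ρ_n F_n`, and for every `n` and `θ`,
`⟪R θ, F_n(Φ θ) − F̄(Φ θ)⟫ = (η_n − η̄) − α(μ_n − μ̄) = ω_n − ω̄`; in particular the phase
fluctuation function `ℱ_n(θ) = ⟪R θ, F_n(Φ θ) − F̄(Φ θ)⟫` is constant, so `ℱ_n' ≡ 0`. -/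
theorem switching_radial_isochron_phase_fluctuations_constant
    (Γ : Type*) [Fintype Γ]
    (ρ : Γ → ℝ) (hρ : ∀ n, 0 ≤ ρ n) (hρsum : ∑ n, ρ n = 1)
    (μ η : Γ → ℝ) (α μbar ηbar : ℝ)
    (hμbar : μbar = ∑ n, ρ n * μ n) (hηbar : ηbar = ∑ n, ρ n * η n)
    (hμpos : 0 < μbar)
    (F : Γ → EuclideanSpace ℝ (Fin 2) → EuclideanSpace ℝ (Fin 2))
    (hF : F = fun n (v : EuclideanSpace ℝ (Fin 2)) =>
      !₂[μ n * v 0 - η n * v 1 - (v 0 ^ 2 + v 1 ^ 2) * (v 0 - α * v 1),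
        μ n * v 1 + η n * v 0 - (v 0 ^ 2 + v 1 ^ 2) * (v 1 + α * v 0)])
    (Fbar : EuclideanSpace ℝ (Fin 2) → EuclideanSpace ℝ (Fin 2))
    (hFbar : Fbar = fun (v : EuclideanSpace ℝ (Fin 2)) =>
      !₂[μbar * v 0 - ηbar * v 1 - (v 0 ^ 2 + v 1 ^ 2) * (v 0 - α * v 1),
        μbar * v 1 + ηbar * v 0 - (v 0 ^ 2 + v 1 ^ 2) * (v 1 + α * v 0)])
    (Φ R : ℝ → EuclideanSpace ℝ (Fin 2))
    (hΦ : Φ = fun θ => !₂[Real.sqrt μbar * Real.cos θ, Real.sqrt μbar * Real.sin θ])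
    (hR : R = fun θ => (1 / Real.sqrt μbar) •
      (!₂[-Real.sin θ - α * Real.cos θ, Real.cos θ - α * Real.sin θ] :
        EuclideanSpace ℝ (Fin 2))) :
    (∀ v : EuclideanSpace ℝ (Fin 2), ∑ n, ρ n • F n v = Fbar v) ∧
      (∀ (n : Γ) (θ : ℝ),
        ⟪R θ, F n (Φ θ) - Fbar (Φ θ)⟫ = (η n - ηbar) - α * (μ n - μbar)) ∧
      (∀ (n : Γ) (θ : ℝ),
        deriv (fun θ' => ⟪R θ', F n (Φ θ') - Fbar (Φ θ')⟫) θ = 0) := by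
  have hsne : Real.sqrt μbar ≠ 0 := by positivity
  have hs2 : Real.sqrt μbar * Real.sqrt μbar = μbar := Real.mul_self_sqrt hμpos.le
  have h1 : ∀ v : EuclideanSpace ℝ (Fin 2), ∑ n, ρ n • F n v = Fbar v := by
    intro v
    ext i
    have hsum : (∑ n, ρ n • F n v) i = ∑ n, ρ n * (F n v i) := by
      induction (Finset.univ : Finset Γ) using Finset.cons_induction with
      | empty => simp
      | cons a s ha ih => rw [Finset.sum_cons, Finset.sum_cons, ← ih]; rfl
    rw [hsum]
    fin_cases i <;>
      simp only [Fin.zero_eta, Fin.mk_one, hF, hFbar, Matrix.cons_val_zero, Matrix.cons_val_one, Matrix.head_cons]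
    · calc ∑ n, ρ n * (μ n * v 0 - η n * v 1 - (v 0 ^ 2 + v 1 ^ 2) * (v 0 - α * v 1))
          = ∑ n, ((ρ n * μ n) * v 0 - (ρ n * η n) * v 1
              - ρ n * ((v 0 ^ 2 + v 1 ^ 2) * (v 0 - α * v 1))) := by
            apply Finset.sum_congr rfl; intros; ring
        _ = _ := by
            rw [Finset.sum_sub_distrib, Finset.sum_sub_distrib, ← Finset.sum_mul,
              ← Finset.sum_mul, ← Finset.sum_mul, hρsum, ← hμbar, ← hηbar]; ring
    · calc ∑ n, ρ n * (μ n * v 1 + η n * v 0 - (v 0 ^ 2 + v 1 ^ 2) * (v 1 + α * v 0))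
          = ∑ n, ((ρ n * μ n) * v 1 + (ρ n * η n) * v 0
              - ρ n * ((v 0 ^ 2 + v 1 ^ 2) * (v 1 + α * v 0))) := by
            apply Finset.sum_congr rfl; intros; ring
        _ = _ := by
            rw [Finset.sum_sub_distrib, Finset.sum_add_distrib, ← Finset.sum_mul,
              ← Finset.sum_mul, ← Finset.sum_mul, hρsum, ← hμbar, ← hηbar]; ring
  have h2 : ∀ (n : Γ) (θ : ℝ),
      ⟪R θ, F n (Φ θ) - Fbar (Φ θ)⟫ = (η n - ηbar) - α * (μ n - μbar) := by
    intro n θ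
    have hc : Real.sin θ ^ 2 + Real.cos θ ^ 2 = 1 := Real.sin_sq_add_cos_sq θ
    simp only [hF, hFbar, hΦ, hR, PiLp.inner_apply, PiLp.sub_apply, PiLp.smul_apply,
      smul_eq_mul, RCLike.inner_apply, conj_trivial, Fin.sum_univ_two,
      Matrix.cons_val_zero, Matrix.cons_val_one, Matrix.head_cons]
    field_simp
    linear_combination (η n - μ n * α + α * μbar - ηbar) * hc
  refine ⟨h1, h2, ?_⟩
  intro n θ
  have : (fun θ' => ⟪R θ', F n (Φ θ') - Fbar (Φ θ')⟫)
      = fun _ => (η n - ηbar) - α * (μ n - μbar) := funext fun θ' => h2 n θ'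
  rw [this, deriv_const]
end

section
/- Let Γ be a finite nonempty set, W : Γ × Γ → ℝ entrywise nonnegative with W_{mm} = 0, λ_m := ∑_k W_{km} > 0 for all m, P_{km} := W_{km}/λ_m, A_{nm} := W_{nm} − δ_{nm}λ_n, and let ρ : Γ → ℝ be nonnegative with ∑_m A_{nm}ρ_m = 0 for all n and Z := ∑_a λ_a ρ_a > 0. Let B be the matrix with entries B_{kq} = λ_k ρ_k / Z (all columns equal), and assume that P^R → B entrywise as R → ∞. Let h : Γ → ℝ satisfy ∑_{q} ρ_q h_q = 0, and set v_q := ρ_q h_q. Then: (i) B v = 0; and (ii) the series ∑_{j=0}^{∞} A·diag(λ)⁻¹·P^j · v converges and its sum equals −v; equivalently, for every m ∈ Γ, −∑_{j=0}^{∞} ∑_{p,q∈Γ} A_{mp} λ_p^{−1} (P^j)_{pq} ρ_q h_q = ρ_m h_m. -/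
open Matrix

open Filter Finset in
lemma summable_of_step_contraction (a : ℕ → ℝ) (ha : ∀ m, 0 ≤ a m)
    (N : ℕ) (hN : 0 < N) (c : ℝ) (hc0 : 0 ≤ c) (hc1 : c < 1)
    (hstep : ∀ m, a (m + N) ≤ c * a m) : Summable a := by
  have key : ∀ q r, a (q * N + r) ≤ c ^ q * a r := by
    intro q
    induction q with
    | zero => intro r; simp
    | succ q ih =>
      intro r
      have he : (q + 1) * N + r = (q * N + r) + N := by ring
      rw [he]
      calc a ((q*N + r) + N) ≤ c * a (q*N+r) := hstep _
        _ ≤ c * (c ^ q * a r) := mul_le_mul_of_nonneg_left (ih r) hc0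
        _ = c ^ (q+1) * a r := by ring
  set C : ℝ := ∑ r ∈ Finset.range N, a r with hC
  have hC0 : 0 ≤ C := Finset.sum_nonneg fun r _ => ha r
  have hCr : ∀ r < N, a r ≤ C := fun r hr =>
    Finset.single_le_sum (fun i _ => ha i) (Finset.mem_range.mpr hr)
  haveI : NeZero N := ⟨hN.ne'⟩
  have hsum2 : Summable fun p : ℕ × Fin N => c ^ p.1 * C := by
    rw [summable_prod_of_nonneg (fun p => by positivity)]
    refine ⟨fun q => Summable.of_finite, ?_⟩
    have h1 : ∀ q : ℕ, ∑' r : Fin N, c ^ q * C = (N : ℝ) * (c ^ q * C) := fun q => by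
      rw [tsum_fintype]; simp [Finset.sum_const, nsmul_eq_mul]
    simp_rw [h1]
    exact ((summable_geometric_of_lt_one hc0 hc1).mul_right C).mul_left _
  have hsum : Summable fun j : ℕ => c ^ (j / N) * C := by
    apply ((Nat.divModEquiv N).symm.summable_iff).1
    convert hsum2 using 1
    funext p
    simp only [Function.comp, Nat.divModEquiv_symm_apply]
    congr 1
    rw [Nat.mul_comm, Nat.mul_add_div hN, Nat.div_eq_of_lt p.2.is_lt, Nat.add_zero]
  refine Summable.of_nonneg_of_le ha (fun j => ?_) hsum
  calc a j = a (j / N * N + j % N) := by rw [Nat.div_add_mod']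
    _ ≤ c ^ (j / N) * a (j % N) := key _ _
    _ ≤ c ^ (j / N) * C := mul_le_mul_of_nonneg_left (hCr _ (Nat.mod_lt j hN)) (by positivity)

/-- **Pseudo-inverse identity for the generator acting on mean-zero vectors.**
Let `W` be an entrywise nonnegative matrix on a finite nonempty set `Γ` with zero diagonal,
positive escape rates `λ_m = ∑_k W_{km}`, jump matrix `P_{km} = W_{km}/λ_m`, generator
`A_{nm} = W_{nm} − δ_{nm} λ_n`, and stationary vector `ρ ≥ 0` (`∑_m A_{nm} ρ_m = 0`) with
`Z = ∑_a λ_a ρ_a > 0`. Let `B` be the rank-one matrix with `B_{kq} = λ_k ρ_k / Z`, and assume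
`P^R → B` as `R → ∞`. If `h : Γ → ℝ` satisfies `∑_q ρ_q h_q = 0` and `v_q = ρ_q h_q`, then
(i) `B v = 0`, and (ii) the series `∑_{j=0}^∞ A·diag(λ)⁻¹·P^j · v` converges with sum `−v`. -/
theorem generator_pseudo_inverse_series
    (Γ : Type*) [Fintype Γ] [DecidableEq Γ] [Nonempty Γ]
    (W : Matrix Γ Γ ℝ) (hW : ∀ k m, 0 ≤ W k m) (hWdiag : ∀ m, W m m = 0)
    (lam : Γ → ℝ) (hlam : ∀ m, lam m = ∑ k, W k m) (hlampos : ∀ m, 0 < lam m)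
    (P : Matrix Γ Γ ℝ) (hP : ∀ k m, P k m = W k m / lam m)
    (A : Matrix Γ Γ ℝ) (hA : ∀ n m, A n m = W n m - if n = m then lam n else 0)
    (ρ : Γ → ℝ) (hρ : ∀ m, 0 ≤ ρ m) (hstat : ∀ n, ∑ m, A n m * ρ m = 0)
    (Z : ℝ) (hZ : Z = ∑ a, lam a * ρ a) (hZpos : 0 < Z)
    (B : Matrix Γ Γ ℝ) (hB : ∀ k q, B k q = lam k * ρ k / Z)
    (hPF : Filter.Tendsto (fun R : ℕ => P ^ R) Filter.atTop (nhds B))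
    (h : Γ → ℝ) (hmean : ∑ q, ρ q * h q = 0)
    (v : Γ → ℝ) (hv : ∀ q, v q = ρ q * h q) :
    B *ᵥ v = 0 ∧
      HasSum (fun j : ℕ =>
        (A * Matrix.diagonal (fun m => (lam m)⁻¹) * P ^ j) *ᵥ v) (-v) := by
  classical
  have hlamne : ∀ m, lam m ≠ 0 := fun m => (hlampos m).ne'
  have hvsum : ∑ q, v q = 0 := by simp_rw [hv]; exact hmean
  -- (i)
  have hBv : B *ᵥ v = 0 := by
    funext k
    show ∑ q, B k q * v q = 0
    calc ∑ q, B k q * v q = ∑ q, lam k * ρ k / Z * v q := by simp_rw [hB]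
      _ = lam k * ρ k / Z * ∑ q, v q := by rw [Finset.mul_sum]
      _ = 0 := by rw [hvsum, mul_zero]
  -- stationarity in W-form
  have hWρ : ∀ n, ∑ m, W n m * ρ m = lam n * ρ n := by
    intro n
    have := hstat n
    simp_rw [hA, sub_mul, Finset.sum_sub_distrib, ite_mul, zero_mul,
      Finset.sum_ite_eq, Finset.mem_univ, if_true, sub_eq_zero] at this
    exact this
  -- column sums of P are 1
  have hPcol : ∀ q, ∑ k, P k q = 1 := by
    intro q
    simp_rw [hP, ← Finset.sum_div, ← hlam]
    exact div_self (hlamne q)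
  set D : Matrix Γ Γ ℝ := Matrix.diagonal (fun m => (lam m)⁻¹) with hD
  have hAe : A = W - Matrix.diagonal lam := by
    ext n m; rw [Matrix.sub_apply, Matrix.diagonal_apply, hA]
  have hPW : P = W * D := by
    ext k m
    rw [hD, Matrix.mul_diagonal, hP, div_eq_mul_inv]
  have hAD : A * D = P - 1 := by
    rw [hAe, Matrix.sub_mul, ← hPW, hD, Matrix.diagonal_mul_diagonal]
    have h1 : (fun i => lam i * (lam i)⁻¹) = fun _ : Γ => (1:ℝ) :=
      funext fun m => mul_inv_cancel₀ (hlamne m)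
    rw [h1, Matrix.diagonal_one]
  have hADP : ∀ j : ℕ, A * D * P ^ j = P ^ (j+1) - P ^ j := by
    intro j
    rw [hAD, Matrix.sub_mul, one_mul, ← pow_succ']
  -- the key matrices
  set Q : Matrix Γ Γ ℝ := P - B with hQ
  have hPB : P * B = B := by
    ext k q
    have hterm : ∀ p, P k p * B p q = W k p * ρ p / Z := by
      intro p
      rw [hP, hB, div_mul_div_comm,
        show W k p * (lam p * ρ p) = lam p * (W k p * ρ p) from by ring,
        mul_div_mul_left _ _ (hlamne p)]
    rw [Matrix.mul_apply]
    simp_rw [hterm]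
    rw [← Finset.sum_div, hWρ, hB]
  have hBP : B * P = B := by
    ext k q
    have hterm : ∀ p, B k p * P p q = lam k * ρ k / Z * P p q := by
      intro p; rw [hB]
    rw [Matrix.mul_apply]
    simp_rw [hterm]
    rw [← Finset.mul_sum, hPcol, mul_one, hB]
  have hBB : B * B = B := by
    ext k q
    have hterm : ∀ p, B k p * B p q = lam k * ρ k / Z * (lam p * ρ p) / Z := by
      intro p; rw [hB k p, hB p q]; ring
    rw [Matrix.mul_apply]
    simp_rw [hterm]
    rw [← Finset.sum_div, ← Finset.mul_sum, ← hZ, mul_div_assoc,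
      div_self hZpos.ne', mul_one, hB]
  have hPjB : ∀ j : ℕ, P ^ j * B = B := by
    intro j
    induction j with
    | zero => rw [pow_zero, one_mul]
    | succ j ih => rw [pow_succ, mul_assoc, hPB, ih]
  have hQpow : ∀ j : ℕ, 1 ≤ j → Q ^ j = P ^ j - B := by
    intro j hj
    induction j with
    | zero => omega
    | succ j ih =>
      rcases Nat.eq_or_lt_of_le hj with hj' | hj'
      · rw [← hj', pow_one, pow_one, hQ]
      · have hj1 : 1 ≤ j := by omega
        rw [pow_succ, ih hj1, hQ, Matrix.sub_mul, Matrix.mul_sub, Matrix.mul_sub,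
          hPjB, hBP, hBB, ← pow_succ]
        abel
  set g : ℕ → Γ → ℝ := fun j => (P ^ j) *ᵥ v with hg
  have hgQ : ∀ j, g j = (Q ^ j) *ᵥ v := by
    intro j
    rcases Nat.eq_zero_or_pos j with rfl | hj
    · rw [hg]; simp
    · rw [hg, hQpow j hj, Matrix.sub_mulVec, hBv, sub_zero]
  -- entrywise convergence
  have hent : ∀ k q, Filter.Tendsto (fun j : ℕ => (P ^ j) k q) Filter.atTop (nhds (B k q)) := by
    intro k q
    exact (((continuous_apply q).tendsto (B k)).comp
      (((continuous_apply k).tendsto B).comp hPF))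
  -- explicit norm bound
  set nrm : Matrix Γ Γ ℝ → ℝ := fun M => ∑ k, ∑ q, |M k q| with hnrm
  have hnrm0 : ∀ M, 0 ≤ nrm M := fun M =>
    Finset.sum_nonneg fun k _ => Finset.sum_nonneg fun q _ => abs_nonneg _
  have hmv : ∀ (M : Matrix Γ Γ ℝ) (x : Γ → ℝ), ‖M *ᵥ x‖ ≤ nrm M * ‖x‖ := by
    intro M x
    rw [pi_norm_le_iff_of_nonneg (by positivity)]
    intro k
    have : ‖(M *ᵥ x) k‖ = |∑ q, M k q * x q| := rfl
    rw [this]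
    calc |∑ q, M k q * x q| ≤ ∑ q, |M k q * x q| := Finset.abs_sum_le_sum_abs _ _
      _ ≤ ∑ q, |M k q| * ‖x‖ := by
          refine Finset.sum_le_sum fun q _ => ?_
          rw [abs_mul]
          exact mul_le_mul_of_nonneg_left
            (Real.norm_eq_abs (x q) ▸ norm_le_pi_norm x q) (abs_nonneg _)
      _ = (∑ q, |M k q|) * ‖x‖ := by rw [Finset.sum_mul]
      _ ≤ nrm M * ‖x‖ := by
          refine mul_le_mul_of_nonneg_right ?_ (norm_nonneg _)
          exact Finset.single_le_sum (f := fun i => ∑ q, |M i q|)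
            (fun i _ => Finset.sum_nonneg fun q _ => abs_nonneg _) (Finset.mem_univ k)
  -- nrm (P^j - B) → 0
  have hnt : Filter.Tendsto (fun j : ℕ => nrm (P ^ j - B)) Filter.atTop (nhds 0) := by
    have : ∀ j : ℕ, nrm (P ^ j - B) = ∑ k, ∑ q, |(P ^ j) k q - B k q| := by
      intro j; rfl
    simp_rw [this]
    have h0 : (0 : ℝ) = ∑ k : Γ, ∑ q : Γ, |B k q - B k q| := by simp
    rw [h0]
    refine tendsto_finset_sum _ fun k _ => tendsto_finset_sum _ fun q _ => ?_
    exact (((hent k q).sub tendsto_const_nhds).abs)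
  -- pick N with nrm (Q^N) < 1/2
  obtain ⟨N, hN1, hNc⟩ : ∃ N : ℕ, 1 ≤ N ∧ nrm (P ^ N - B) < 1/2 := by
    have h1 := hnt.eventually (gt_mem_nhds (by norm_num : (0:ℝ) < 1/2))
    have h2 := Filter.eventually_ge_atTop (1 : ℕ)
    exact ((h2.and h1).exists.imp fun N hN => ⟨hN.1, hN.2⟩)
  set c : ℝ := nrm (P ^ N - B) with hc
  have hQN : Q ^ N = P ^ N - B := hQpow N hN1
  -- summability of g
  have hstep : ∀ m, ‖g (m + N)‖ ≤ c * ‖g m‖ := by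
    intro m
    have : g (m + N) = (Q ^ N) *ᵥ (g m) := by
      rw [hgQ (m + N), hgQ m, Matrix.mulVec_mulVec, ← pow_add, Nat.add_comm]
    rw [this, hQN]
    exact hmv _ _
  have hga : Summable fun j => ‖g j‖ :=
    summable_of_step_contraction _ (fun m => norm_nonneg _) N hN1 c (hnrm0 _)
      (lt_trans hNc (by norm_num)) hstep
  have hgs : Summable g := Summable.of_norm hga
  -- the series function
  have hfg : (fun j : ℕ => (A * Matrix.diagonal (fun m => (lam m)⁻¹) * P ^ j) *ᵥ v)
      = fun j => g (j+1) - g j := by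
    funext j
    rw [← hD, hADP j, Matrix.sub_mulVec]
  have hF : Summable fun j => g (j+1) - g j :=
    ((summable_nat_add_iff 1).2 hgs).sub hgs
  have htel : ∀ n : ℕ, ∑ j ∈ Finset.range n, (g (j+1) - g j) = g n - v := by
    intro n
    rw [Finset.sum_range_sub g n]
    congr 1
    rw [hg]; simp
  -- g n → 0
  have hg0 : Filter.Tendsto g Filter.atTop (nhds 0) := by
    rw [tendsto_pi_nhds]
    intro k
    have : ∀ n : ℕ, g n k = ∑ q, (P ^ n) k q * v q := fun n => rfl
    simp_rw [this]
    have hlim : (0 : Γ → ℝ) k = ∑ q, B k q * v q := by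
      have : ∑ q, B k q * v q = (B *ᵥ v) k := rfl
      rw [this, hBv]
    rw [hlim]
    exact tendsto_finset_sum _ fun q _ => (hent k q).mul_const (v q)
  have hlim1 : Filter.Tendsto (fun n => ∑ j ∈ Finset.range n, (g (j+1) - g j))
      Filter.atTop (nhds (-v)) := by
    simp_rw [htel]
    have := hg0.sub (tendsto_const_nhds (x := v))
    rwa [zero_sub] at this
  have hsum : HasSum (fun j => g (j+1) - g j) (-v) := by
    have h1 := hF.hasSum
    have h2 := h1.tendsto_sum_nat
    rwa [tendsto_nhds_unique h2 hlim1] at h1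
  exact ⟨hBv, by rw [hfg]; exact hsum⟩
end
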